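/- Let F be an m×n Ferrers diagram, δ an integer with 0 < δ ≤ n, θ_i the number of dots on the i-th diagonal of F (i ∈ [m]), and θ_max = max_i θ_i. Then for every prime power q ≥ θ_max − 1 there exists an [F, k, δ]_q code with k = Σ_{i=0}^{m−1} max{0, θ_i − δ + 1}. -/

import Mathlib

open Polynomial Matrix Finset

/-- An `m×n` Ferrers diagram. -/
def IsFerrersDiagram (m n : ℕ) (F : Finset (ℕ × ℕ)) : Prop :=
  (∀ p ∈ F, p.1 < m ∧ p.2 < n) ∧
  (∀ p ∈ F, 1 ≤ p.1 → (p.1 - 1, p.2) ∈ F) ∧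
  (∀ p ∈ F, p.2 + 1 < n → (p.1, p.2 + 1) ∈ F) ∧
  (∀ j < n, (0, j) ∈ F) ∧
  (∀ i < m, (i, n - 1) ∈ F)

/-- The number of dots of `F` on the `i`-th diagonal (the cells `(i-j, n-1-j)`). -/
def diagDots (n : ℕ) (F : Finset (ℕ × ℕ)) (i : ℕ) : ℕ :=
  (F.filter (fun p => p.1 + (n - 1 - p.2) = i)).card

section Aux
variable {K : Type*} [Field K]

lemma aux_rank_submatrix_le {m n w : ℕ} (M : Matrix (Fin m) (Fin n) K)
    (f : Fin w → Fin m) (g : Fin w → Fin n) :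
    (M.submatrix f g).rank ≤ M.rank := by
  have h1 : ((1 : Matrix (Fin m) (Fin m) K).submatrix f (Equiv.refl (Fin m))) * M
      = M.submatrix f id := by
    rw [Matrix.one_submatrix_mul]; simp
  have h2 : (M.submatrix f id) * ((1 : Matrix (Fin n) (Fin n) K).submatrix (Equiv.refl (Fin n)) g)
      = M.submatrix f g := by
    rw [Matrix.mul_submatrix_one]; simp
  calc (M.submatrix f g).rank
      = ((M.submatrix f id) * ((1 : Matrix (Fin n) (Fin n) K).submatrix (Equiv.refl (Fin n)) g)).rank := by rw [h2]
    _ ≤ (M.submatrix f id).rank := Matrix.rank_mul_le_left _ _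
    _ = (((1 : Matrix (Fin m) (Fin m) K).submatrix f (Equiv.refl (Fin m))) * M).rank := by rw [h1]
    _ ≤ M.rank := Matrix.rank_mul_le_right _ _

lemma aux_rank_ge {m n : ℕ} (M : Matrix (Fin m) (Fin n) K) (i : ℕ)
    (T : Finset (Fin m × Fin n))
    (hdiag : ∀ p ∈ T, (p.1 : ℕ) + (n - 1 - (p.2 : ℕ)) = i)
    (hne : ∀ p ∈ T, M p.1 p.2 ≠ 0)
    (hhi : ∀ (r : Fin m) (c : Fin n), i < (r : ℕ) + (n - 1 - (c : ℕ)) → M r c = 0) :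
    T.card ≤ M.rank := by
  classical
  have hrowinj : Set.InjOn Prod.fst (T : Set (Fin m × Fin n)) := by
    intro p hp q hq hpq
    have h1 := hdiag p hp
    have h2 := hdiag q hq
    have hc : (p.2 : ℕ) = (q.2 : ℕ) := by
      have := p.2.isLt; have := q.2.isLt
      have hrr : (p.1 : ℕ) = (q.1 : ℕ) := by rw [hpq]
      omega
    exact Prod.ext hpq (Fin.ext hc)
  set R : Finset (Fin m) := T.image Prod.fst with hR
  have hcard : R.card = T.card := Finset.card_image_of_injOn hrowinj
  let e := R.orderIsoOfFin hcard
  have hcell : ∀ s : Fin T.card, ∃ p, p ∈ T ∧ p.1 = (e s : Fin m) := by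
    intro s
    obtain ⟨p, hp, hps⟩ := Finset.mem_image.mp (e s).2
    exact ⟨p, hp, hps⟩
  choose cell hcellT hcellfst using hcell
  set A : Matrix (Fin T.card) (Fin T.card) K :=
    M.submatrix (fun s => (cell s).1) (fun s => (cell s).2) with hA
  have htri : A.BlockTriangular id := by
    intro s t hts
    have hlt : ((cell t).1 : Fin m) < (cell s).1 := by
      rw [hcellfst, hcellfst]
      exact_mod_cast e.strictMono hts
    have h1 := hdiag _ (hcellT s)
    have h2 := hdiag _ (hcellT t)
    have hc2 := ((cell t).2).isLt
    have hlt' : ((cell t).1 : ℕ) < ((cell s).1 : ℕ) := hlt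
    show M (cell s).1 (cell t).2 = 0
    exact hhi _ _ (by omega)
  have hdet : A.det ≠ 0 := by
    rw [Matrix.det_of_upperTriangular htri]
    exact Finset.prod_ne_zero_iff.mpr fun s _ => hne _ (hcellT s)
  have hunit : IsUnit A := by
    rw [Matrix.isUnit_iff_isUnit_det]
    exact isUnit_iff_ne_zero.mpr hdet
  have hrankA : A.rank = T.card := by
    rw [Matrix.rank_of_isUnit A hunit, Fintype.card_fin]
  calc T.card = A.rank := hrankA.symm
    _ ≤ M.rank := aux_rank_submatrix_le M _ _

lemma aux_degreeLT_zero {p : K[X]} (h : p ∈ Polynomial.degreeLT K 0) : p = 0 := by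
  rw [Polynomial.mem_degreeLT, Nat.cast_zero, Nat.WithBot.lt_zero_iff, Polynomial.degree_eq_bot] at h
  exact h

lemma aux_natDegree_lt {p : K[X]} {kk : ℕ} (hp : p ∈ Polynomial.degreeLT K kk)
    (hp0 : p ≠ 0) (hc : p.coeff (kk - 1) = 0) : p.natDegree < kk - 1 := by
  have hk1 : 1 ≤ kk := by
    by_contra h
    have h0 : kk = 0 := by omega
    exact hp0 (aux_degreeLT_zero (h0 ▸ hp))
  have hdeg : p.natDegree < kk :=
    (Polynomial.natDegree_lt_iff_degree_lt hp0).mpr (Polynomial.mem_degreeLT.mp hp)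
  have hne : p.natDegree ≠ kk - 1 := by
    intro hEq
    apply hp0
    rw [← Polynomial.leadingCoeff_eq_zero, Polynomial.leadingCoeff, hEq]
    exact hc
  omega

lemma aux_card_eval_zero {p : K[X]} (hp0 : p ≠ 0)
    (s : Finset (ℕ × ℕ)) (f : ℕ × ℕ → K) (hf : Set.InjOn f s)
    (hz : ∀ q ∈ s, p.eval (f q) = 0) : s.card ≤ p.natDegree := by
  classical
  have h1 : s.card ≤ p.roots.toFinset.card := by
    apply Finset.card_le_card_of_injOn f ?_ hf
    intro q hq
    rw [Finset.mem_coe, Multiset.mem_toFinset, Polynomial.mem_roots hp0]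
    exact hz q hq
  calc s.card ≤ p.roots.toFinset.card := h1
    _ ≤ Multiset.card p.roots := Multiset.toFinset_card_le _
    _ ≤ p.natDegree := Polynomial.card_roots' p

end Aux

/-- Theorem 2.3 of the paper (Construction 1): for an `m×n` Ferrers diagram `F`,
`0 < δ ≤ n`, and any prime power `q ≥ θ_max - 1`, there is an `[F, k, δ]_q` code
with `k = Σ_{i=0}^{m-1} max{0, θ_i - δ + 1}`. -/
theorem stmt16 (Fq : Type*) [Field Fq] [Fintype Fq]
    (m n δ : ℕ) (hδ1 : 0 < δ) (hδn : δ ≤ n)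
    (F : Finset (ℕ × ℕ)) (hF : IsFerrersDiagram m n F)
    (hq : (Finset.range m).sup (diagDots n F) - 1 ≤ Fintype.card Fq) :
    ∃ C : Submodule Fq (Matrix (Fin m) (Fin n) Fq),
      (∀ M ∈ C, ∀ (i : Fin m) (j : Fin n), ((i : ℕ), (j : ℕ)) ∉ F → M i j = 0) ∧
      Module.finrank Fq C = ∑ i ∈ Finset.range m, (diagDots n F i + 1 - δ) ∧
      (∀ M ∈ C, M ≠ 0 → δ ≤ M.rank) := by
  classical
  obtain ⟨hFbound, hup, hright, hrow0, hcoln⟩ := hF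
  rcases Nat.eq_zero_or_pos m with hm | hm
  · subst hm
    refine ⟨⊥, ?_, ?_, ?_⟩
    · intro M hM i j _; exact absurd i.isLt (by omega)
    · simp
    · intro M hM hM0; exact absurd (Submodule.mem_bot _ |>.mp hM) hM0
  have hn : 0 < n := lt_of_lt_of_le hδ1 hδn
  -- abbreviations
  set dd : ℕ × ℕ → ℕ := fun p => p.1 + (n - 1 - p.2) with hdd
  set D : ℕ → Finset (ℕ × ℕ) := fun i => F.filter (fun p => dd p = i) with hD
  set θ : ℕ → ℕ := diagDots n F with hθ
  have hθD : ∀ i, θ i = (D i).card := fun i => rfl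
  set k : ℕ → ℕ := fun i => θ i + 1 - δ with hk
  -- the distinguished cell on each diagonal
  set top : ℕ → ℕ × ℕ := fun i => if h : (D i).Nonempty then h.choose else (0, 0) with htopdef
  have htop : ∀ i, (D i).Nonempty → top i ∈ D i := by
    intro i h
    simp only [htopdef, dif_pos h]
    exact h.choose_spec
  -- injections from the diagonals (minus the distinguished cell) into Fq
  have hinj : ∀ i, ∃ e : ℕ × ℕ → Fq, i < m → Set.InjOn e (((D i).erase (top i)) : Set (ℕ × ℕ)) := by
    intro i
    by_cases him : i < m
    · have hcard : ((D i).erase (top i)).card ≤ Fintype.card Fq := by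
        have h1 : ((D i).erase (top i)).card ≤ (D i).card - 1 := by
          rcases (D i).eq_empty_or_nonempty with h | h
          · simp [h]
          · rw [Finset.card_erase_of_mem (htop i h)]
        have h2 : (D i).card ≤ (Finset.range m).sup θ := by
          rw [← hθD]
          exact Finset.le_sup (Finset.mem_range.mpr him)
        omega
      have hne : Nonempty ((((D i).erase (top i)) : Finset (ℕ × ℕ)) ↪ Fq) := by
        rw [Function.Embedding.nonempty_iff_card_le]
        simpa [Fintype.card_coe] using hcard
      obtain ⟨f⟩ := hne
      refine ⟨fun p => if h : p ∈ (D i).erase (top i) then f ⟨p, h⟩ else 0, fun _ => ?_⟩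
      intro a ha b hb hab
      simp only [Finset.mem_coe] at ha hb
      simp only [dif_pos ha, dif_pos hb] at hab
      exact Subtype.mk_eq_mk.mp (f.injective hab)
    · exact ⟨fun _ => 0, fun h => absurd h him⟩
  choose e he using hinj
  -- the entry function
  set ent : (Fin m → Polynomial Fq) → Matrix (Fin m) (Fin n) Fq := fun ps =>
    Matrix.of fun r c =>
      if h : ((r : ℕ), (c : ℕ)) ∈ F ∧ dd ((r : ℕ), (c : ℕ)) < m then
        (if ((r : ℕ), (c : ℕ)) = top (dd ((r : ℕ), (c : ℕ))) then
          (ps ⟨dd ((r : ℕ), (c : ℕ)), h.2⟩).coeff (k (dd ((r : ℕ), (c : ℕ))) - 1)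
        else (ps ⟨dd ((r : ℕ), (c : ℕ)), h.2⟩).eval (e (dd ((r : ℕ), (c : ℕ))) ((r : ℕ), (c : ℕ))))
      else 0
    with hent
  have hadd : ∀ ps qs, ent (ps + qs) = ent ps + ent qs := by
    intro ps qs
    ext r c
    simp only [hent, Matrix.of_apply, Matrix.add_apply, Pi.add_apply]
    split_ifs <;> simp
  have hsmul : ∀ (a : Fq) ps, ent (a • ps) = a • ent ps := by
    intro a ps
    ext r c
    simp only [hent, Matrix.of_apply, Matrix.smul_apply, Pi.smul_apply, smul_eq_mul]
    split_ifs <;> simp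
  set Φ : (Fin m → Polynomial Fq) →ₗ[Fq] Matrix (Fin m) (Fin n) Fq :=
    { toFun := ent, map_add' := hadd, map_smul' := hsmul } with hΦ
  set ρ : (∀ i : Fin m, Polynomial.degreeLT Fq (k (i : ℕ))) →ₗ[Fq] (Fin m → Polynomial Fq) :=
    LinearMap.pi (fun i => (Polynomial.degreeLT Fq (k (i : ℕ))).subtype ∘ₗ LinearMap.proj i) with hρ
  set Ψ := Φ ∘ₗ ρ with hΨ
  -- bridging: matrix entries at cells of F
  have hentry : ∀ (ps : Fin m → Polynomial Fq) (q : ℕ × ℕ), q ∈ F → ∀ (hqm : dd q < m),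
      ent ps ⟨q.1 % m, Nat.mod_lt _ hm⟩ ⟨q.2 % n, Nat.mod_lt _ hn⟩ =
        (if q = top (dd q) then (ps ⟨dd q, hqm⟩).coeff (k (dd q) - 1)
         else (ps ⟨dd q, hqm⟩).eval (e (dd q) q)) := by
    intro ps q hqF hqm
    obtain ⟨h1, h2⟩ := hFbound q hqF
    have e1 : q.1 % m = q.1 := Nat.mod_eq_of_lt h1
    have e2 : q.2 % n = q.2 := Nat.mod_eq_of_lt h2
    have hpair : (((⟨q.1 % m, Nat.mod_lt _ hm⟩ : Fin m) : ℕ), ((⟨q.2 % n, Nat.mod_lt _ hn⟩ : Fin n) : ℕ)) = q := by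
      simp [e1, e2]
    simp only [hent, Matrix.of_apply, hpair]
    rw [dif_pos (⟨hqF, hqm⟩ : q ∈ F ∧ dd q < m)]
  refine ⟨LinearMap.range Ψ, ?_, ?_, ?_⟩
  · -- support condition
    rintro M ⟨ps, rfl⟩ i j hij
    show ent (ρ ps) i j = 0
    simp only [hent, Matrix.of_apply]
    rw [dif_neg (by tauto)]
  · -- dimension
    have hinjΨ : Function.Injective Ψ := by
      rw [← LinearMap.ker_eq_bot, LinearMap.ker_eq_bot']
      intro ps hps
      have hentzero : ∀ (r : Fin m) (c : Fin n), ent (ρ ps) r c = 0 := by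
        intro r c
        have h0 : Ψ ps = 0 := hps
        calc ent (ρ ps) r c = Ψ ps r c := rfl
          _ = 0 := by rw [h0]; rfl
      funext i
      refine Subtype.ext ?_
      show (ps i : Polynomial Fq) = 0
      set p : Polynomial Fq := (ps i : Polynomial Fq) with hpdef
      have hpmem : p ∈ Polynomial.degreeLT Fq (k (i : ℕ)) := (ps i).2
      by_contra hp0
      have hk1 : 1 ≤ k (i : ℕ) := by
        rcases Nat.eq_zero_or_pos (k (i : ℕ)) with h0 | h1
        · exact absurd (aux_degreeLT_zero (h0 ▸ hpmem)) hp0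
        · exact h1
      have hθge : δ ≤ θ (i : ℕ) := by
        have : k (i : ℕ) = θ (i : ℕ) + 1 - δ := rfl
        omega
      have hDne : (D (i : ℕ)).Nonempty := by
        rw [← Finset.card_pos, ← hθD]; omega
      have hzero : ∀ q ∈ D (i : ℕ),
          (if q = top (i : ℕ) then p.coeff (k (i : ℕ) - 1) else p.eval (e (i : ℕ) q)) = 0 := by
        intro q hqD
        have hqF : q ∈ F := (Finset.mem_filter.mp hqD).1
        have hqd : dd q = (i : ℕ) := (Finset.mem_filter.mp hqD).2
        have hqm : dd q < m := by rw [hqd]; exact i.isLt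
        have h0 := hentry (ρ ps) q hqF hqm
        rw [hentzero] at h0
        have hfin : (⟨dd q, hqm⟩ : Fin m) = i := Fin.ext hqd
        rw [hfin] at h0
        have hρ2 : (ρ ps) i = p := rfl
        rw [hρ2, hqd] at h0
        exact h0.symm
      have hcoeff : p.coeff (k (i : ℕ) - 1) = 0 := by
        have hmem := htop _ hDne
        have := hzero (top (i : ℕ)) hmem
        rwa [if_pos rfl] at this
      have heval : ∀ q ∈ (D (i : ℕ)).erase (top (i : ℕ)), p.eval (e (i : ℕ) q) = 0 := by
        intro q hq
        have hne := (Finset.mem_erase.mp hq).1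
        have := hzero q (Finset.mem_of_mem_erase hq)
        rwa [if_neg hne] at this
      have hnat : p.natDegree < k (i : ℕ) - 1 := aux_natDegree_lt hpmem hp0 hcoeff
      have hcarde : ((D (i : ℕ)).erase (top (i : ℕ))).card = θ (i : ℕ) - 1 := by
        rw [Finset.card_erase_of_mem (htop _ hDne), ← hθD]
      apply hp0
      apply Polynomial.eq_zero_of_natDegree_lt_card_of_eval_eq_zero' p
        (((D (i : ℕ)).erase (top (i : ℕ))).image (e (i : ℕ)))
      · intro x hx
        obtain ⟨q, hq, rfl⟩ := Finset.mem_image.mp hx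
        exact heval q hq
      · rw [Finset.card_image_of_injOn (he (i : ℕ) i.isLt), hcarde]
        have : k (i : ℕ) = θ (i : ℕ) + 1 - δ := rfl
        omega
    haveI : ∀ i : Fin m, Module.Finite Fq (Polynomial.degreeLT Fq (k (i : ℕ))) :=
      fun i => Module.Finite.equiv (Polynomial.degreeLTEquiv Fq _).symm
    rw [LinearMap.finrank_range_of_inj hinjΨ, Module.finrank_pi_fintype]
    have hfr : ∀ i : Fin m, Module.finrank Fq (Polynomial.degreeLT Fq (k (i : ℕ))) = k (i : ℕ) := by
      intro i
      rw [(Polynomial.degreeLTEquiv Fq _).finrank_eq]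
      simp
    simp_rw [hfr]
    rw [Fin.sum_univ_eq_sum_range (fun i => k i)]
  · -- rank
    rintro M hM hM0
    obtain ⟨ps, rfl⟩ := hM
    set E : ℕ × ℕ → Fq := fun q =>
      ent (ρ ps) ⟨q.1 % m, Nat.mod_lt _ hm⟩ ⟨q.2 % n, Nat.mod_lt _ hn⟩ with hE
    have hS : (Finset.univ.filter (fun rc : Fin m × Fin n => Ψ ps rc.1 rc.2 ≠ 0)).Nonempty := by
      by_contra h
      rw [Finset.not_nonempty_iff_eq_empty, Finset.filter_eq_empty_iff] at h
      apply hM0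
      ext r c
      have := h (Finset.mem_univ (r, c))
      simpa using this
    set S := Finset.univ.filter (fun rc : Fin m × Fin n => Ψ ps rc.1 rc.2 ≠ 0) with hSdef
    have hSim : (S.image (fun rc : Fin m × Fin n => dd ((rc.1 : ℕ), (rc.2 : ℕ)))).Nonempty :=
      hS.image _
    set i0 := (S.image (fun rc : Fin m × Fin n => dd ((rc.1 : ℕ), (rc.2 : ℕ)))).max' hSim with hi0
    obtain ⟨p0, hp0S, hp0d0⟩ := Finset.mem_image.mp (Finset.max'_mem _ hSim)
    have hp0d : dd ((p0.1 : ℕ), (p0.2 : ℕ)) = i0 := hp0d0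
    have hp0ne : Ψ ps p0.1 p0.2 ≠ 0 := (Finset.mem_filter.mp hp0S).2
    have hp0cond : ((p0.1 : ℕ), (p0.2 : ℕ)) ∈ F ∧ dd ((p0.1 : ℕ), (p0.2 : ℕ)) < m := by
      by_contra h
      apply hp0ne
      show ent (ρ ps) p0.1 p0.2 = 0
      simp only [hent, Matrix.of_apply]
      rw [dif_neg h]
    have hi0m : i0 < m := hp0d ▸ hp0cond.2
    have hhi : ∀ (r : Fin m) (c : Fin n), i0 < (r : ℕ) + (n - 1 - (c : ℕ)) → Ψ ps r c = 0 := by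
      intro r c hlt
      by_contra hne0
      have hmem : (r, c) ∈ S := Finset.mem_filter.mpr ⟨Finset.mem_univ _, hne0⟩
      have hle : dd ((r : ℕ), (c : ℕ)) ≤ i0 := by
        have h := Finset.le_max'
          (S.image (fun rc : Fin m × Fin n => dd ((rc.1 : ℕ), (rc.2 : ℕ))))
          (dd ((r : ℕ), (c : ℕ)))
          (Finset.mem_image_of_mem _ hmem)
        exact h
      have hddrc : dd ((r : ℕ), (c : ℕ)) = (r : ℕ) + (n - 1 - (c : ℕ)) := rfl
      omega
    set iF : Fin m := ⟨i0, hi0m⟩ with hiF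
    set p : Polynomial Fq := ((ps iF : Polynomial.degreeLT Fq (k (iF : ℕ))) : Polynomial Fq)
      with hpdef
    have hpmem : p ∈ Polynomial.degreeLT Fq (k i0) := (ps iF).2
    have hEeq : ∀ q ∈ D i0, E q = (if q = top i0 then p.coeff (k i0 - 1) else p.eval (e i0 q)) := by
      intro q hqD
      have hqF : q ∈ F := (Finset.mem_filter.mp hqD).1
      have hqd : dd q = i0 := (Finset.mem_filter.mp hqD).2
      have hqm : dd q < m := by rw [hqd]; exact hi0m
      have h0 := hentry (ρ ps) q hqF hqm
      have hfin : (⟨dd q, hqm⟩ : Fin m) = iF := Fin.ext hqd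
      rw [hfin] at h0
      have hρ2 : (ρ ps) iF = p := rfl
      rw [hρ2, hqd] at h0
      exact h0
    have hfst : (⟨(p0.1 : ℕ) % m, Nat.mod_lt _ hm⟩ : Fin m) = p0.1 :=
      Fin.ext (Nat.mod_eq_of_lt p0.1.isLt)
    have hsnd : (⟨(p0.2 : ℕ) % n, Nat.mod_lt _ hn⟩ : Fin n) = p0.2 :=
      Fin.ext (Nat.mod_eq_of_lt p0.2.isLt)
    have hp0E : E ((p0.1 : ℕ), (p0.2 : ℕ)) = Ψ ps p0.1 p0.2 := by
      show ent (ρ ps) _ _ = ent (ρ ps) p0.1 p0.2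
      rw [hfst, hsnd]
    have hp0cell : ((p0.1 : ℕ), (p0.2 : ℕ)) ∈ D i0 := Finset.mem_filter.mpr ⟨hp0cond.1, hp0d⟩
    have hpne : p ≠ 0 := by
      intro h
      apply hp0ne
      rw [← hp0E, hEeq _ hp0cell, h]
      split_ifs <;> simp
    have hk1 : 1 ≤ k i0 := by
      rcases Nat.eq_zero_or_pos (k i0) with h0 | h1
      · exact absurd (aux_degreeLT_zero (h0 ▸ hpmem)) hpne
      · exact h1
    have hkθ : k i0 = θ i0 + 1 - δ := rfl
    have hθge : δ ≤ θ i0 := by omega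
    have hDne : (D i0).Nonempty := ⟨_, hp0cell⟩
    set Z := (D i0).filter (fun q => E q = 0) with hZ
    set N := (D i0).filter (fun q => ¬ (E q = 0)) with hN
    have hsplit : Z.card + N.card = θ i0 := by
      rw [hθD]
      exact Finset.card_filter_add_card_filter_not _
    have hZe : (Z.erase (top i0)).card ≤ p.natDegree := by
      apply aux_card_eval_zero hpne _ (e i0) ((he i0 hi0m).mono ?_)
      · intro q hq
        obtain ⟨hqne, hqZ⟩ := Finset.mem_erase.mp hq
        have hqD := Finset.mem_of_mem_filter _ hqZ
        have h0 := (Finset.mem_filter.mp hqZ).2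
        rw [hEeq q hqD, if_neg hqne] at h0
        exact h0
      · intro x hx
        exact Finset.coe_subset.mpr (Finset.erase_subset_erase _ (Finset.filter_subset _ _)) hx
    have hZbound : Z.card ≤ θ i0 - δ := by
      by_cases hc : p.coeff (k i0 - 1) = 0
      · have hnat : p.natDegree < k i0 - 1 := aux_natDegree_lt hpmem hpne hc
        by_cases htopZ : top i0 ∈ Z
        · have hZpos : 1 ≤ Z.card := Finset.card_pos.mpr ⟨_, htopZ⟩
          have := Finset.card_erase_of_mem htopZ
          omega
        · rw [Finset.erase_eq_of_notMem htopZ] at hZe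
          omega
      · have htopD := htop _ hDne
        have htopZ : top i0 ∉ Z := by
          intro h
          have h0 := (Finset.mem_filter.mp h).2
          rw [hEeq _ htopD, if_pos rfl] at h0
          exact hc h0
        have hnat : p.natDegree < k i0 :=
          (Polynomial.natDegree_lt_iff_degree_lt hpne).mpr (Polynomial.mem_degreeLT.mp hpmem)
        rw [Finset.erase_eq_of_notMem htopZ] at hZe
        omega
    have hNδ : δ ≤ N.card := by omega
    have hNF : ∀ q ∈ N, q ∈ F := fun q hq =>
      (Finset.mem_filter.mp (Finset.mem_of_mem_filter _ hq)).1
    set toF : ℕ × ℕ → Fin m × Fin n := fun q =>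
      (⟨q.1 % m, Nat.mod_lt _ hm⟩, ⟨q.2 % n, Nat.mod_lt _ hn⟩) with htoF
    set T := N.image toF with hT
    have hTcard : T.card = N.card := by
      apply Finset.card_image_of_injOn
      intro a ha b hb hab
      simp only [Finset.mem_coe] at ha hb
      obtain ⟨ha1, ha2⟩ := hFbound a (hNF a ha)
      obtain ⟨hb1, hb2⟩ := hFbound b (hNF b hb)
      have h1 : a.1 % m = b.1 % m := congrArg (fun x => ((x.1 : Fin m) : ℕ)) hab
      have h2 : a.2 % n = b.2 % n := congrArg (fun x => ((x.2 : Fin n) : ℕ)) hab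
      rw [Nat.mod_eq_of_lt ha1, Nat.mod_eq_of_lt hb1] at h1
      rw [Nat.mod_eq_of_lt ha2, Nat.mod_eq_of_lt hb2] at h2
      exact Prod.ext h1 h2
    have hrank : T.card ≤ (Ψ ps).rank := by
      apply aux_rank_ge (Ψ ps) i0 T
      · intro pc hpc
        obtain ⟨q, hqN, rfl⟩ := Finset.mem_image.mp hpc
        obtain ⟨hq1, hq2⟩ := hFbound q (hNF q hqN)
        have hqd : dd q = i0 :=
          (Finset.mem_filter.mp (Finset.mem_of_mem_filter _ hqN)).2
        show q.1 % m + (n - 1 - q.2 % n) = i0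
        rw [Nat.mod_eq_of_lt hq1, Nat.mod_eq_of_lt hq2]
        exact hqd
      · intro pc hpc
        obtain ⟨q, hqN, rfl⟩ := Finset.mem_image.mp hpc
        have h0 := (Finset.mem_filter.mp hqN).2
        exact h0
      · exact hhi
    omega
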